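/- Let p ≥ 1, 0 < ε < 1, α ≥ 1, M ≥ 1, and let f^{(0)}, …, f^{(m)} ∈ ℝ^n and h^{(0)}, …, h^{(m)} ∈ ℝ^n satisfy: f^{(0)} = 0 and h^{(0)} = 0; each h^{(t)} has nonnegative coordinates; |f^{(t)}_i - f^{(s)}_i| ≤ h^{(t)}_i - h^{(s)}_i for all 0 ≤ s ≤ t ≤ m and every coordinate i; ‖f^{(t)}‖_p^p ≥ (1/α)·‖h^{(t)}‖_p^p for every t (the α-bounded deletion property); ‖h^{(t)}‖_p^p ≥ 1 whenever h^{(t)} ≠ 0; and ‖h^{(m)}‖_p^p ≤ n·M^p. Then every ε-flip chain in the sequence (‖f^{(0)}‖_p, ‖f^{(1)}‖_p, …, ‖f^{(m)}‖_p) has length at most 2 + 2α·(ln n + p·ln M)/ε^p. -/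

import Mathlib

private lemma rpow_superadd {p x y : ℝ} (hp : 1 ≤ p) (hx : 0 ≤ x) (hy : 0 ≤ y) :
    x ^ p + y ^ p ≤ (x + y) ^ p := by
  have := NNReal.coe_le_coe.2 (NNReal.add_rpow_le_rpow_add (⟨x, hx⟩ : NNReal) ⟨y, hy⟩ hp)
  push_cast at this
  exact this

private lemma half_le_log {x : ℝ} (h0 : 0 < x) (h1 : x ≤ 1) : x / 2 ≤ Real.log (1 + x) := by
  have hpos : (0:ℝ) < 1 + x := by linarith
  have hlog := Real.log_le_sub_one_of_pos (x := (1+x)⁻¹) (by positivity)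
  rw [Real.log_inv] at hlog
  have heq : (1+x)⁻¹ - 1 = -(x/(1+x)) := by field_simp; ring
  rw [heq] at hlog
  have h2 : x / 2 ≤ x / (1+x) := by
    apply div_le_div_of_nonneg_left h0.le hpos; linarith
  linarith

set_option maxHeartbeats 1600000 in
/-- Lemma 8.1: for an `α`-bounded deletion stream `f^{(0)}, …, f^{(m)}` with absolute-value
(insertion-only) stream `h^{(0)}, …, h^{(m)}`, every `ε`-flip chain in the sequence
`t ↦ ‖f^{(t)}‖_p` has length at most `2 + 2α·(ln n + p·ln M)/ε^p`. Here
`‖x‖_p = (∑ i, |x i|^p)^{1/p}` and `‖x‖_p^p = ∑ i, |x i|^p` via real powers. -/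
theorem stmt_9 (n m : ℕ) (p ε α M : ℝ) (f h : ℕ → Fin n → ℝ)
    (hp : 1 ≤ p) (hε0 : 0 < ε) (hε1 : ε < 1) (hα : 1 ≤ α) (hM : 1 ≤ M)
    (hf0 : f 0 = 0) (hh0 : h 0 = 0)
    (hhpos : ∀ t ≤ m, ∀ i, 0 ≤ h t i)
    (hdiff : ∀ s t, s ≤ t → t ≤ m → ∀ i, |f t i - f s i| ≤ h t i - h s i)
    (hbd : ∀ t ≤ m, (1 / α) * (∑ i, |h t i| ^ p) ≤ ∑ i, |f t i| ^ p)
    (hlb : ∀ t ≤ m, h t ≠ 0 → 1 ≤ ∑ i, |h t i| ^ p)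
    (hub : ∑ i, |h m i| ^ p ≤ (n : ℝ) * M ^ p) :
    ∀ l : List ℕ, l.Chain' (· < ·) → (∀ x ∈ l, x ≤ m) →
      l.Chain' (fun a b =>
        ¬((1 - ε) * (∑ i, |f b i| ^ p) ^ (1 / p) ≤ (∑ i, |f a i| ^ p) ^ (1 / p) ∧
          (∑ i, |f a i| ^ p) ^ (1 / p) ≤ (1 + ε) * (∑ i, |f b i| ^ p) ^ (1 / p))) →
      (l.length : ℝ) ≤ 2 + 2 * α * (Real.log n + p * Real.log M) / ε ^ p := by
  have hp0 : (0:ℝ) < p := lt_of_lt_of_le one_pos hp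
  have hα0 : (0:ℝ) < α := lt_of_lt_of_le one_pos hα
  have hεp : (0:ℝ) < ε ^ p := Real.rpow_pos_of_pos hε0 p
  set F : ℕ → ℝ := fun t => ∑ i, |f t i| ^ p with hFdef
  set H : ℕ → ℝ := fun t => ∑ i, |h t i| ^ p with hHdef
  set δ : ℝ := ε ^ p / α with hδdef
  have hδ0 : 0 < δ := div_pos hεp hα0
  have hδ1 : δ ≤ 1 := by
    rw [div_le_one hα0]
    calc ε ^ p ≤ 1 := Real.rpow_le_one hε0.le hε1.le hp0.le
    _ ≤ α := hα
  have hFnn : ∀ t, 0 ≤ F t := fun t =>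
    Finset.sum_nonneg (fun i _ => Real.rpow_nonneg (abs_nonneg _) p)
  have hHnn : ∀ t, 0 ≤ H t := fun t =>
    Finset.sum_nonneg (fun i _ => Real.rpow_nonneg (abs_nonneg _) p)
  have habs : ∀ t ≤ m, ∀ i, |f t i| ≤ h t i := by
    intro t ht i
    have := hdiff 0 t (Nat.zero_le t) ht i
    simpa [hf0, hh0] using this
  have hcmono : ∀ s t, s ≤ t → t ≤ m → ∀ i, h s i ≤ h t i := by
    intro s t hst ht i
    have := hdiff s t hst ht i
    have := abs_nonneg (f t i - f s i)
    linarith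
  have hHmono : ∀ s t, s ≤ t → t ≤ m → H s ≤ H t := by
    intro s t hst ht
    apply Finset.sum_le_sum
    intro i _
    have h1 : 0 ≤ h s i := hhpos s (le_trans hst ht) i
    have h2 : h s i ≤ h t i := hcmono s t hst ht i
    rw [abs_of_nonneg h1, abs_of_nonneg (le_trans h1 h2)]
    exact Real.rpow_le_rpow h1 h2 hp0.le
  have hFH : ∀ t ≤ m, F t ≤ H t := by
    intro t ht
    apply Finset.sum_le_sum
    intro i _
    rw [abs_of_nonneg (hhpos t ht i)]
    exact Real.rpow_le_rpow (abs_nonneg _) (habs t ht i) hp0.le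
  have hHpow : ∀ t, (F t ^ (1/p)) ^ p = F t := by
    intro t
    rw [← Real.rpow_mul (hFnn t), one_div_mul_cancel hp0.ne', Real.rpow_one]
  -- the key step along a flip pair
  have step : ∀ a b, a < b → b ≤ m →
      ¬((1 - ε) * F b ^ (1 / p) ≤ F a ^ (1 / p) ∧
        F a ^ (1 / p) ≤ (1 + ε) * F b ^ (1 / p)) →
      0 < H b ∧ (1 + δ) * H a ≤ H b := by
    intro a b hab hbm hflip
    have ham : a ≤ m := le_trans hab.le hbm
    set Na : ℝ := F a ^ (1/p) with hNa
    set Nb : ℝ := F b ^ (1/p) with hNb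
    have hNann : 0 ≤ Na := Real.rpow_nonneg (hFnn a) _
    have hNbnn : 0 ≤ Nb := Real.rpow_nonneg (hFnn b) _
    -- flip implies ε·Nb < |Na - Nb|
    have key : ε * Nb < |Na - Nb| := by
      rcases not_and_or.1 hflip with hc | hc
      · push_neg at hc
        have : ε * Nb < Nb - Na := by nlinarith
        exact lt_of_lt_of_le this (by rw [abs_sub_comm]; exact le_abs_self _)
      · push_neg at hc
        have : ε * Nb < Na - Nb := by nlinarith
        exact lt_of_lt_of_le this (le_abs_self _)
    -- reverse triangle inequality via Minkowski
    set D : ℝ := (∑ i, |f a i - f b i| ^ p) ^ (1/p) with hD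
    have htri : |Na - Nb| ≤ D := by
      rw [abs_sub_le_iff]
      constructor
      · have := Real.Lp_add_le Finset.univ (fun i => f a i - f b i) (f b) hp
        simp only [sub_add_cancel] at this
        rw [hNa, hNb, hD]; linarith
      · have := Real.Lp_add_le Finset.univ (fun i => f b i - f a i) (f a) hp
        simp only [sub_add_cancel] at this
        have heq : (∑ i, |f b i - f a i| ^ p) = ∑ i, |f a i - f b i| ^ p := by
          apply Finset.sum_congr rfl; intro i _; rw [abs_sub_comm]
        rw [heq] at this
        rw [hNa, hNb, hD]; linarith
    have hDnn : (0:ℝ) ≤ ∑ i, |f a i - f b i| ^ p :=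
      Finset.sum_nonneg (fun i _ => Real.rpow_nonneg (abs_nonneg _) p)
    -- raise to the p-th power
    have hpow : ε ^ p * F b ≤ ∑ i, |f a i - f b i| ^ p := by
      have h1 : (ε * Nb) ^ p ≤ D ^ p :=
        Real.rpow_le_rpow (mul_nonneg hε0.le hNbnn) (le_trans key.le htri) hp0.le
      have h2 : (ε * Nb) ^ p = ε ^ p * Nb ^ p := Real.mul_rpow hε0.le hNbnn
      have h3 : Nb ^ p = F b := hHpow b
      have h4 : D ^ p = ∑ i, |f a i - f b i| ^ p := by
        rw [hD, ← Real.rpow_mul hDnn, one_div_mul_cancel hp0.ne', Real.rpow_one]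
      rw [h2, h3, h4] at h1
      exact h1
    -- bound the difference sum by H b - H a
    have hsum : (∑ i, |f a i - f b i| ^ p) ≤ H b - H a := by
      have : ∀ i ∈ Finset.univ, |f a i - f b i| ^ p ≤ |h b i| ^ p - |h a i| ^ p := by
        intro i _
        have h1 : 0 ≤ h a i := hhpos a ham i
        have h2 : h a i ≤ h b i := hcmono a b hab.le hbm i
        have h3 : |f a i - f b i| ≤ h b i - h a i := by
          rw [abs_sub_comm]; exact hdiff a b hab.le hbm i
        have h4 : |f a i - f b i| ^ p ≤ (h b i - h a i) ^ p :=
          Real.rpow_le_rpow (abs_nonneg _) h3 hp0.le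
        have h5 : h a i ^ p + (h b i - h a i) ^ p ≤ (h a i + (h b i - h a i)) ^ p :=
          rpow_superadd hp h1 (by linarith)
        rw [abs_of_nonneg h1, abs_of_nonneg (le_trans h1 h2)]
        have : h a i + (h b i - h a i) = h b i := by ring
        rw [this] at h5
        linarith
      calc (∑ i, |f a i - f b i| ^ p) ≤ ∑ i, (|h b i| ^ p - |h a i| ^ p) :=
            Finset.sum_le_sum this
        _ = H b - H a := by rw [Finset.sum_sub_distrib]
    -- conclude
    have hεFb : ε ^ p * F b ≤ H b - H a := le_trans hpow hsum
    have hαFb : (1 / α) * H b ≤ F b := hbd b hbm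
    have hδHb : δ * H b ≤ H b - H a := by
      have h1 : ε ^ p * ((1/α) * H b) ≤ ε ^ p * F b :=
        mul_le_mul_of_nonneg_left hαFb hεp.le
      have h2 : δ * H b = ε ^ p * ((1/α) * H b) := by
        rw [hδdef]; ring
      rw [h2]; linarith
    have hHb : 0 < H b := by
      by_contra hcon
      push_neg at hcon
      have hHb0 : H b = 0 := le_antisymm hcon (hHnn b)
      have hFb0 : F b = 0 := le_antisymm (by linarith [hFH b hbm]) (hFnn b)
      have hNb0 : Nb = 0 := by rw [hNb, hFb0, Real.zero_rpow (by positivity)]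
      have hNapos : 0 < Na := by
        rw [hNb0, mul_zero, sub_zero, abs_of_nonneg hNann] at key
        exact key
      have hFa0 : F a = 0 := by
        have := hHmono a b hab.le hbm
        have := hFH a ham
        have := hFnn a
        linarith
      rw [hNa, hFa0, Real.zero_rpow (by positivity)] at hNapos
      exact lt_irrefl 0 hNapos
    refine ⟨hHb, ?_⟩
    have hHa : H a ≤ (1 - δ) * H b := by nlinarith
    nlinarith [hHnn a, hHnn b, sq_nonneg δ, mul_nonneg hδ0.le (hHnn b)]
  -- growth along a chain
  have grow : ∀ (l' : List ℕ) (a : ℕ),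
      List.Chain (fun x y => ((1 + δ) * H x ≤ H y ∧ 0 < H y) ∧ y ≤ m) a l' →
      H a * (1 + δ) ^ l'.length ≤ H ((a :: l').getLast (by simp)) := by
    intro l'
    induction l' with
    | nil => intro a _; simp
    | cons b l ih =>
      intro a hchain
      simp only [List.Chain, List.isChain_cons_cons] at hchain
      obtain ⟨⟨⟨hstep, _⟩, _⟩, hc⟩ := hchain
      have hih := ih b hc
      have hlast : ((a :: b :: l).getLast (by simp)) = ((b :: l).getLast (by simp)) :=
        List.getLast_cons (by simp)
      rw [hlast, List.length_cons]
      calc H a * (1 + δ) ^ (l.length + 1) = ((1 + δ) * H a) * (1 + δ) ^ l.length := by ring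
        _ ≤ H b * (1 + δ) ^ l.length := by
            apply mul_le_mul_of_nonneg_right hstep
            positivity
        _ ≤ _ := hih
  -- RHS is at least 2
  have hRnn : 0 ≤ 2 * α * (Real.log n + p * Real.log M) / ε ^ p := by
    apply div_nonneg _ hεp.le
    have h1 : 0 ≤ Real.log n := Real.log_natCast_nonneg n
    have h2 : 0 ≤ Real.log M := Real.log_nonneg hM
    positivity
  intro l hlt hle hflip
  match l with
  | [] => simp; linarith
  | [t1] => simp; linarith
  | t1 :: t2 :: rest =>
    -- combine the chains
    have hcomb : List.Chain (fun x y => ((1 + δ) * H x ≤ H y ∧ 0 < H y) ∧ y ≤ m) t1 (t2 :: rest) := by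
      show List.IsChain _ (t1 :: t2 :: rest)
      rw [List.isChain_iff_getElem]
      rw [List.Chain', List.isChain_iff_getElem] at hlt hflip
      intro i hi
      have hbm : (t1 :: t2 :: rest)[i+1] ≤ m := hle _ (List.getElem_mem _)
      have hs := step _ _ (hlt i hi) hbm (hflip i hi)
      exact ⟨⟨hs.2, hs.1⟩, hbm⟩
    simp only [List.Chain, List.isChain_cons_cons] at hcomb
    obtain ⟨⟨⟨_, hHt2⟩, ht2m⟩, hc⟩ := hcomb
    have hht2 : h t2 ≠ 0 := by
      intro hz
      have hz0 : H t2 = 0 := by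
        simp only [hHdef, hz]
        simp [Real.zero_rpow hp0.ne']
      linarith
    have hH1 : 1 ≤ H t2 := hlb t2 ht2m hht2
    set k := rest.length with hk
    set tl := (t2 :: rest).getLast (by simp) with htl
    have hgrow := grow rest t2 hc
    have htlm : tl ≤ m := hle _ (List.mem_cons_of_mem _ (List.getLast_mem (by simp)))
    have hup : H tl ≤ (n:ℝ) * M ^ p := le_trans (hHmono tl m htlm le_rfl) hub
    have hpk : (1+δ)^k ≤ (n:ℝ) * M ^ p := by
      calc (1+δ)^k = 1 * (1+δ)^k := (one_mul _).symm
        _ ≤ H t2 * (1+δ)^k := by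
            apply mul_le_mul_of_nonneg_right hH1; positivity
        _ ≤ H tl := hgrow
        _ ≤ _ := hup
    have hpk1 : (1:ℝ) ≤ (1+δ)^k := one_le_pow₀ (by linarith)
    have hMp : (0:ℝ) < M ^ p := Real.rpow_pos_of_pos (by linarith) p
    have hnpos : (0:ℝ) < n := by
      by_contra hcon
      push_neg at hcon
      have h2 : (n:ℝ) * M ^ p ≤ 0 := mul_nonpos_iff.2 (Or.inr ⟨hcon, hMp.le⟩)
      linarith
    have hlog : (k:ℝ) * Real.log (1+δ) ≤ Real.log n + p * Real.log M := by
      have h1 := Real.log_le_log (by positivity) hpk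
      rw [Real.log_pow, Real.log_mul (ne_of_gt hnpos) (ne_of_gt hMp),
        Real.log_rpow (by linarith : (0:ℝ) < M)] at h1
      exact h1
    have hhalf : δ/2 ≤ Real.log (1+δ) := half_le_log hδ0 hδ1
    have hkb : (k:ℝ) * (δ/2) ≤ Real.log n + p * Real.log M := by
      refine le_trans ?_ hlog
      exact mul_le_mul_of_nonneg_left hhalf (Nat.cast_nonneg k)
    have hδα : δ * α = ε ^ p := div_mul_cancel₀ _ hα0.ne'
    have hfin : (k:ℝ) ≤ 2 * α * (Real.log n + p * Real.log M) / ε ^ p := by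
      rw [le_div_iff₀ hεp]
      have hprod := mul_le_mul_of_nonneg_left hkb (show (0:ℝ) ≤ 2*α by positivity)
      have hrw : (k:ℝ) * ε ^ p = 2 * α * ((k:ℝ) * (δ/2)) := by
        rw [← hδα]; ring
      linarith
    show ((t1 :: t2 :: rest).length : ℝ) ≤ _
    simp only [List.length_cons, ← hk]
    push_cast
    linarith
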